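/- Let G₁ and G₂ be ordered graphs, and let L₁ and L₂ be the lengths (numbers of vertices) of the longest monotone paths in G₁ and G₂ respectively. Then the length of the longest monotone path in the lexicographic product G₁ ⊗ G₂ is exactly L₁·L₂. -/

import Mathlib

/-- The lexicographic product of ordered graphs `G₁` and `G₂`: vertex set `β × α`,
with `(b,a)` adjacent to `(b',a')` iff `b = b'` and `a a' ∈ E(G₁)`, or `b ≠ b'` and
`b b' ∈ E(G₂)`. -/
def lexProd {α β : Type*} (G₁ : SimpleGraph α) (G₂ : SimpleGraph β) :
    SimpleGraph (β × α) where
  Adj p p' := (p.1 = p'.1 ∧ G₁.Adj p.2 p'.2) ∨ (p.1 ≠ p'.1 ∧ G₂.Adj p.1 p'.1)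
  symm := by
    refine ⟨?_⟩
    rintro p p' (⟨h, ha⟩ | ⟨h, ha⟩)
    · exact Or.inl ⟨h.symm, ha.symm⟩
    · exact Or.inr ⟨fun hh => h hh.symm, ha.symm⟩
  loopless := by
    refine ⟨?_⟩
    rintro p (⟨_, ha⟩ | ⟨h, _⟩)
    · exact G₁.irrefl ha
    · exact h rfl

/-- The lexicographic order on `β × α` (first coordinate dominant). -/
def lexLT {α β : Type*} [LT α] [LT β] (p p' : β × α) : Prop :=
  p.1 < p'.1 ∨ (p.1 = p'.1 ∧ p.2 < p'.2)

/-- `G` has a monotone path with `ℓ` vertices with respect to the order `lt`. -/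
def HasMonoPathG {V : Type*} (lt : V → V → Prop) (G : SimpleGraph V) (ℓ : ℕ) : Prop :=
  ∃ v : Fin ℓ → V, (∀ i j : Fin ℓ, i < j → lt (v i) (v j)) ∧
    ∀ i j : Fin ℓ, (i : ℕ) + 1 = (j : ℕ) → G.Adj (v i) (v j)

/-- The number of vertices of a longest monotone path in `G` w.r.t. the order `lt`. -/
noncomputable def longestMono {V : Type*} (lt : V → V → Prop) (G : SimpleGraph V) : ℕ :=
  sSup {ℓ : ℕ | HasMonoPathG lt G ℓ}

lemma hasMono_zero {V : Type*} (lt : V → V → Prop) (G : SimpleGraph V) :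
    HasMonoPathG lt G 0 :=
  ⟨fun i => i.elim0, fun i => i.elim0, fun i => i.elim0⟩

lemma hasMono_one {V : Type*} [Nonempty V] (lt : V → V → Prop) (G : SimpleGraph V) :
    HasMonoPathG lt G 1 := by
  obtain ⟨x⟩ := ‹Nonempty V›
  refine ⟨fun _ => x, ?_, ?_⟩
  · intro i j hij
    have hi := i.isLt; have hj := j.isLt
    rw [Fin.lt_def] at hij; omega
  · intro i j hij
    have hi := i.isLt; have hj := j.isLt; omega

lemma mono_le_card {V : Type*} [Fintype V] (lt : V → V → Prop)
    (hirr : ∀ x, ¬ lt x x) (G : SimpleGraph V) {ℓ : ℕ}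
    (h : HasMonoPathG lt G ℓ) : ℓ ≤ Fintype.card V := by
  obtain ⟨v, hmono, -⟩ := h
  have hinj : Function.Injective v := by
    intro i j hij
    by_contra hne
    rcases lt_or_gt_of_ne (show i ≠ j from hne) with h' | h'
    · have := hmono i j h'; rw [hij] at this; exact hirr _ this
    · have := hmono j i h'; rw [hij] at this; exact hirr _ this
  simpa using Fintype.card_le_of_injective v hinj

lemma lexProd_hasMono {α β : Type*} [LinearOrder α] [LinearOrder β]
    (G₁ : SimpleGraph α) (G₂ : SimpleGraph β) {L₁ L₂ : ℕ} (hL₁ : 0 < L₁)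
    (h₁ : HasMonoPathG (· < ·) G₁ L₁) (h₂ : HasMonoPathG (· < ·) G₂ L₂) :
    HasMonoPathG lexLT (lexProd G₁ G₂) (L₁ * L₂) := by
  obtain ⟨a, ha, ha'⟩ := h₁
  obtain ⟨b, hb, hb'⟩ := h₂
  have hdivlt : ∀ k : Fin (L₁ * L₂), (k : ℕ) / L₁ < L₂ := by
    intro k
    exact Nat.div_lt_of_lt_mul k.isLt
  refine ⟨fun k => (b ⟨(k : ℕ) / L₁, hdivlt k⟩, a ⟨(k : ℕ) % L₁, Nat.mod_lt _ hL₁⟩), ?_, ?_⟩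
  · intro i j hij
    have hij' : (i : ℕ) < (j : ℕ) := hij
    have hdiv : (i : ℕ) / L₁ ≤ (j : ℕ) / L₁ := Nat.div_le_div_right hij'.le
    rcases eq_or_lt_of_le hdiv with heq | hlt
    · right
      refine ⟨congrArg b (Fin.ext heq), ?_⟩
      have h1 : L₁ * ((i : ℕ) / L₁) + (i : ℕ) % L₁ = (i : ℕ) := Nat.div_add_mod _ _
      have h2 : L₁ * ((j : ℕ) / L₁) + (j : ℕ) % L₁ = (j : ℕ) := Nat.div_add_mod _ _
      rw [← heq] at h2
      have hmod : (i : ℕ) % L₁ < (j : ℕ) % L₁ := by omega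
      exact ha _ _ (by simpa [Fin.lt_def] using hmod)
    · exact Or.inl (hb _ _ (by simpa [Fin.lt_def] using hlt))
  · intro i j hij
    have hmlt : (i : ℕ) % L₁ < L₁ := Nat.mod_lt _ hL₁
    have h1 : L₁ * ((i : ℕ) / L₁) + (i : ℕ) % L₁ = (i : ℕ) := Nat.div_add_mod _ _
    by_cases hc : (i : ℕ) % L₁ + 1 = L₁
    · have hj : (j : ℕ) = L₁ * ((i : ℕ) / L₁ + 1) := by
        rw [Nat.mul_add, Nat.mul_one]; omega
      have hjd : (j : ℕ) / L₁ = (i : ℕ) / L₁ + 1 := by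
        rw [hj, Nat.mul_div_cancel_left _ hL₁]
      refine Or.inr ⟨?_, ?_⟩
      · exact ne_of_lt (hb _ _ (by simp [Fin.lt_def, hjd]))
      · exact hb' _ _ (by simp [hjd])
    · have hlt1 : (i : ℕ) % L₁ + 1 < L₁ := by omega
      have hj : (j : ℕ) = L₁ * ((i : ℕ) / L₁) + ((i : ℕ) % L₁ + 1) := by omega
      have hjd : (j : ℕ) / L₁ = (i : ℕ) / L₁ := by
        rw [hj, Nat.mul_add_div hL₁, Nat.div_eq_of_lt hlt1, Nat.add_zero]
      have hjm : (j : ℕ) % L₁ = (i : ℕ) % L₁ + 1 := by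
        rw [hj, Nat.mul_add_mod, Nat.mod_eq_of_lt hlt1]
      exact Or.inl ⟨congrArg b (Fin.ext hjd.symm), ha' _ _ (by simp [hjm])⟩

lemma lexProd_mono_le {α β : Type*} [LinearOrder α] [LinearOrder β]
    (G₁ : SimpleGraph α) (G₂ : SimpleGraph β) {L₁ L₂ ℓ : ℕ}
    (hb1 : ∀ m, HasMonoPathG (· < ·) G₁ m → m ≤ L₁)
    (hb2 : ∀ m, HasMonoPathG (· < ·) G₂ m → m ≤ L₂)
    (h : HasMonoPathG lexLT (lexProd G₁ G₂) ℓ) : ℓ ≤ L₁ * L₂ := by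
  rcases Nat.eq_zero_or_pos ℓ with rfl | hpos
  · exact Nat.zero_le _
  obtain ⟨N, rfl⟩ : ∃ N, ℓ = N + 1 := ⟨ℓ - 1, by omega⟩
  obtain ⟨v, hmono, hadj⟩ := h
  set w : ℕ → β × α := fun n => v ⟨min n N, by omega⟩ with hw
  -- basic facts about w
  have hwmono : ∀ m n, m < n → n ≤ N → lexLT (w m) (w n) := by
    intro m n hmn hn
    have : min m N = m := Nat.min_eq_left (by omega)
    have h2 : min n N = n := Nat.min_eq_left hn
    simp only [hw, this, h2]
    exact hmono _ _ (by simp [Fin.lt_def, hmn])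
  have hwadj : ∀ n, n < N → (lexProd G₁ G₂).Adj (w n) (w (n + 1)) := by
    intro n hn
    have h1 : min n N = n := Nat.min_eq_left (by omega)
    have h2 : min (n + 1) N = n + 1 := Nat.min_eq_left (by omega)
    simp only [hw, h1, h2]
    exact hadj _ _ (by simp)
  have hwkey : ∀ m, w m = w (min m N) := by
    intro m
    simp only [hw]
    exact congrArg v (Fin.ext (show m ⊓ N = m ⊓ N ⊓ N by omega))
  have hwfirst : ∀ m n, m ≤ n → (w m).1 ≤ (w n).1 := by
    intro m n hmn
    rcases eq_or_lt_of_le (min_le_min hmn (le_refl N)) with heq | hlt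
    · rw [hwkey m, hwkey n, heq]
    · rw [hwkey m, hwkey n]
      rcases hwmono _ _ hlt (Nat.min_le_right _ _) with h' | ⟨h', -⟩
      · exact le_of_lt h'
      · exact le_of_eq h'
  -- the boundary-counting function q
  set q : ℕ → ℕ := fun n => ((Finset.range n).filter (fun j => (w j).1 ≠ (w (j + 1)).1)).card
    with hq
  have hq0 : q 0 = 0 := by simp [hq]
  have hqsucc : ∀ n, q (n + 1) = if (w n).1 ≠ (w (n + 1)).1 then q n + 1 else q n := by
    intro n
    simp only [hq, Finset.range_add_one, Finset.filter_insert]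
    split_ifs with h'
    · rw [Finset.card_insert_of_notMem (by simp)]
    · rfl
  have hqmono : ∀ m n, m ≤ n → q m ≤ q n := by
    intro m n hmn
    exact Finset.card_le_card (Finset.filter_subset_filter _ (Finset.range_subset_range.2 hmn))
  have hqstep : ∀ n, q (n + 1) = q n ∨ q (n + 1) = q n + 1 := by
    intro n; rw [hqsucc]; split_ifs <;> simp
  -- q constant on a range iff first coordinates constant
  have hconst : ∀ m n, m ≤ n → q m = q n → (w m).1 = (w n).1 := by
    intro m n
    induction n with
    | zero => intro hm _; obtain rfl : m = 0 := (by omega); rfl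
    | succ n ih =>
      intro hm hqe
      rcases Nat.eq_or_lt_of_le hm with rfl | hm'
      · rfl
      · have hm'' : m ≤ n := by omega
        have h1 : q m ≤ q n := hqmono _ _ hm''
        have h2 : q n ≤ q (n + 1) := hqmono _ _ (Nat.le_succ _)
        have hqn : q m = q n := by omega
        have hqn1 : q n = q (n + 1) := by omega
        have hnb : (w n).1 = (w (n + 1)).1 := by
          by_contra hne
          rw [hqsucc n, if_pos hne] at hqn1; omega
        exact (ih hm'' hqn).trans hnb
  have hconst' : ∀ m n, m ≤ n → (w m).1 = (w n).1 → q m = q n := by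
    intro m n
    induction n with
    | zero => intro hm _; obtain rfl : m = 0 := (by omega); rfl
    | succ n ih =>
      intro hm hfe
      rcases Nat.eq_or_lt_of_le hm with rfl | hm'
      · rfl
      · have hm'' : m ≤ n := by omega
        have h1 : (w m).1 ≤ (w n).1 := hwfirst _ _ hm''
        have h2 : (w n).1 ≤ (w (n + 1)).1 := hwfirst _ _ (Nat.le_succ _)
        have e1 : (w m).1 = (w n).1 := le_antisymm h1 (hfe ▸ h2)
        have e2 : (w n).1 = (w (n + 1)).1 := le_antisymm h2 (hfe ▸ h1)
        rw [ih hm'' e1, hqsucc n, if_neg (by simpa using e2)]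
  -- the block-start function s
  have hsex : ∀ n : ℕ, ∃ j, (w j).1 = (w n).1 := fun n => ⟨n, rfl⟩
  set s : ℕ → ℕ := fun n => Nat.find (hsex n) with hs
  have hs_le : ∀ n, s n ≤ n := fun n => Nat.find_le rfl
  have hs_spec : ∀ n, (w (s n)).1 = (w n).1 := fun n => Nat.find_spec (hsex n)
  have hs_eq : ∀ m n, (w m).1 = (w n).1 → s m = s n := by
    intro m n hmn
    apply le_antisymm
    · exact Nat.find_le ((hs_spec n).trans hmn.symm)
    · exact Nat.find_le ((hs_spec m).trans hmn)
  have hblock : ∀ n j, s n ≤ j → j ≤ n → (w j).1 = (w n).1 := by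
    intro n j h1 h2
    refine le_antisymm (hwfirst _ _ h2) ?_
    calc (w n).1 = (w (s n)).1 := (hs_spec n).symm
    _ ≤ (w j).1 := hwfirst _ _ h1
  -- within-block position bound
  have p_lt : ∀ n, n ≤ N → n - s n < L₁ := by
    intro n hn
    have hpath : HasMonoPathG (· < ·) G₁ (n - s n + 1) := by
      refine ⟨fun k => (w (s n + (k : ℕ))).2, ?_, ?_⟩
      · intro k k' hkk'
        have hk' : s n + (k' : ℕ) ≤ n := by have := k'.isLt; omega
        have hk : s n + (k : ℕ) ≤ n := by have := k.isLt; omega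
        have hlx := hwmono (s n + (k : ℕ)) (s n + (k' : ℕ))
          (by have : (k : ℕ) < (k' : ℕ) := hkk'; omega) (by omega)
        have hfe : (w (s n + (k : ℕ))).1 = (w (s n + (k' : ℕ))).1 := by
          rw [hblock n _ (by omega) hk, hblock n _ (by omega) hk']
        rcases hlx with h' | ⟨-, h'⟩
        · rw [hfe] at h'; exact absurd h' (lt_irrefl _)
        · exact h'
      · intro k k' hkk'
        have hk' : s n + (k' : ℕ) ≤ n := by have := k'.isLt; omega
        have hlt : s n + (k : ℕ) < N := by omega
        have hadj' := hwadj (s n + (k : ℕ)) hlt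
        have he : s n + (k' : ℕ) = s n + (k : ℕ) + 1 := by omega
        show G₁.Adj (w (s n + (k : ℕ))).2 (w (s n + (k' : ℕ))).2
        rw [he]
        rcases hadj' with ⟨-, h'⟩ | ⟨hne, -⟩
        · exact h'
        · exact absurd ((hblock n (s n + (k : ℕ)) (by omega) (by omega)).trans
            (hblock n (s n + (k : ℕ) + 1) (by omega) (by omega)).symm) hne
    have := hb1 _ hpath
    omega
  -- intermediate value property of q
  have hIVT : ∀ n j, j ≤ q n → ∃ i, i ≤ n ∧ q i = j := by
    intro n
    induction n with
    | zero => intro j hj; rw [hq0] at hj; exact ⟨0, le_refl _, by omega⟩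
    | succ n ih =>
      intro j hj
      by_cases hjn : j ≤ q n
      · obtain ⟨i, hi, hqi⟩ := ih j hjn
        exact ⟨i, by omega, hqi⟩
      · have := hqstep n
        exact ⟨n + 1, le_refl _, by omega⟩
  have hrex : ∀ j : ℕ, ∃ i, j ≤ q N → (i ≤ N ∧ q i = j) := by
    intro j
    by_cases hj : j ≤ q N
    · obtain ⟨i, hi, hqi⟩ := hIVT N j hj
      exact ⟨i, fun _ => ⟨hi, hqi⟩⟩
    · exact ⟨0, fun h' => absurd h' hj⟩
  set r : ℕ → ℕ := fun j => Nat.find (hrex j) with hr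
  have hr_le : ∀ j, j ≤ q N → r j ≤ N := fun j hj => (Nat.find_spec (hrex j) hj).1
  have hr_q : ∀ j, j ≤ q N → q (r j) = j := fun j hj => (Nat.find_spec (hrex j) hj).2
  have hr_min : ∀ j i, i ≤ N → q i = j → r j ≤ i :=
    fun j i hi hqi => Nat.find_le (fun _ => ⟨hi, hqi⟩)
  -- block count bound
  have q_lt : q N < L₂ := by
    have hpath : HasMonoPathG (· < ·) G₂ (q N + 1) := by
      refine ⟨fun j => (w (r (j : ℕ))).1, ?_, ?_⟩
      · intro j j' hjj'
        have hj : (j : ℕ) ≤ q N := by have := j.isLt; omega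
        have hj' : (j' : ℕ) ≤ q N := by have := j'.isLt; omega
        have hjlt : (j : ℕ) < (j' : ℕ) := hjj'
        have hrlt : r (j : ℕ) < r (j' : ℕ) := by
          by_contra hcon
          have := hqmono (r (j' : ℕ)) (r (j : ℕ)) (by omega)
          rw [hr_q _ hj, hr_q _ hj'] at this
          omega
        refine lt_of_le_of_ne (hwfirst _ _ hrlt.le) ?_
        intro hfe
        have := hconst' _ _ hrlt.le hfe
        rw [hr_q _ hj, hr_q _ hj'] at this
        omega
      · intro j j' hjj'
        have hj : (j : ℕ) ≤ q N := by have := j.isLt; omega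
        have hj' : (j' : ℕ) ≤ q N := by have := j'.isLt; omega
        have hmq : q (r (j' : ℕ)) = (j : ℕ) + 1 := by rw [← hjj'] at hj' ⊢; exact hr_q _ hj'
        have hmN : r (j' : ℕ) ≤ N := hr_le _ hj'
        have hmpos : 0 < r (j' : ℕ) := by
          rcases Nat.eq_zero_or_pos (r (j' : ℕ)) with h0 | h0
          · rw [h0, hq0] at hmq; omega
          · exact h0
        set m' := r (j' : ℕ) - 1 with hm'def
        have hmm : r (j' : ℕ) = m' + 1 := by omega
        have hstep := hqstep m'
        rw [← hmm] at hstep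
        have hq_m' : q m' = (j : ℕ) := by
          rcases hstep with h' | h'
          · exfalso
            have := hr_min ((j' : ℕ)) m' (by omega) (by omega)
            omega
          · omega
        have hq_m1 : q (m' + 1) = (j : ℕ) + 1 := by rw [← hmm]; exact hmq
        have hbd : (w m').1 ≠ (w (m' + 1)).1 := by
          intro hfe
          have h2 := hqsucc m'
          rw [if_neg (by simpa using hfe)] at h2
          omega
        have hadj' := hwadj m' (by omega)
        rcases hadj' with ⟨hfe, -⟩ | ⟨-, hG⟩
        · exact absurd hfe hbd
        · have he : (w (r (j : ℕ))).1 = (w m').1 := by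
            apply hconst
            · exact hr_min ((j : ℕ)) m' (by omega) hq_m'
            · rw [hr_q _ hj, hq_m']
          show G₂.Adj (w (r (j : ℕ))).1 (w (r (j' : ℕ))).1
          rw [he, hmm]
          exact hG
    have := hb2 _ hpath
    omega
  -- the injection
  have key : ∀ i i' : Fin (N + 1), q (i : ℕ) = q (i' : ℕ) →
      (i : ℕ) - s (i : ℕ) = (i' : ℕ) - s (i' : ℕ) → i = i' := by
    have main : ∀ i i' : Fin (N + 1), (i : ℕ) ≤ (i' : ℕ) → q (i : ℕ) = q (i' : ℕ) →
        (i : ℕ) - s (i : ℕ) = (i' : ℕ) - s (i' : ℕ) → i = i' := by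
      intro i i' hle hq hp
      have hfe : (w (i : ℕ)).1 = (w (i' : ℕ)).1 := hconst _ _ hle hq
      have hse : s (i : ℕ) = s (i' : ℕ) := hs_eq _ _ hfe
      have h1 := hs_le (i : ℕ)
      have h2 := hs_le (i' : ℕ)
      exact Fin.ext (by omega)
    intro i i' hq hp
    rcases le_total (i : ℕ) (i' : ℕ) with h | h
    · exact main i i' h hq hp
    · exact (main i' i h hq.symm hp.symm).symm
  have hinj : Function.Injective (fun i : Fin (N + 1) =>
      ((⟨q (i : ℕ), lt_of_le_of_lt (hqmono _ N (by omega)) q_lt⟩ : Fin L₂),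
       (⟨(i : ℕ) - s (i : ℕ), p_lt _ (by omega)⟩ : Fin L₁))) := by
    intro i i' hii'
    simp only [Prod.mk.injEq, Fin.mk.injEq] at hii'
    exact key i i' hii'.1 hii'.2
  have := Fintype.card_le_of_injective _ hinj
  simp only [Fintype.card_fin, Fintype.card_prod] at this
  calc N + 1 ≤ L₂ * L₁ := this
  _ = L₁ * L₂ := Nat.mul_comm _ _

/-- If `L₁, L₂` are the lengths of the longest monotone paths in the ordered graphs
`G₁, G₂`, then the longest monotone path in `G₁ ⊗ G₂` has length exactly `L₁·L₂`. -/
theorem stmt_8 {α β : Type*} [LinearOrder α] [Fintype α] [Nonempty α]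
    [LinearOrder β] [Fintype β] [Nonempty β]
    (G₁ : SimpleGraph α) (G₂ : SimpleGraph β) :
    longestMono lexLT (lexProd G₁ G₂) =
      longestMono (· < ·) G₁ * longestMono (· < ·) G₂ := by
  have irr1 : ∀ x : α, ¬ x < x := fun x => lt_irrefl x
  have irr2 : ∀ x : β, ¬ x < x := fun x => lt_irrefl x
  have irrP : ∀ p : β × α, ¬ lexLT p p := by
    rintro p (h | ⟨-, h⟩) <;> exact lt_irrefl _ h
  have bdd1 : BddAbove {ℓ | HasMonoPathG (· < · : α → α → Prop) G₁ ℓ} :=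
    ⟨Fintype.card α, fun ℓ hℓ => mono_le_card _ irr1 _ hℓ⟩
  have bdd2 : BddAbove {ℓ | HasMonoPathG (· < · : β → β → Prop) G₂ ℓ} :=
    ⟨Fintype.card β, fun ℓ hℓ => mono_le_card _ irr2 _ hℓ⟩
  have bddP : BddAbove {ℓ | HasMonoPathG lexLT (lexProd G₁ G₂) ℓ} :=
    ⟨Fintype.card (β × α), fun ℓ hℓ => mono_le_card _ irrP _ hℓ⟩
  have ne1 : Set.Nonempty {ℓ | HasMonoPathG (· < · : α → α → Prop) G₁ ℓ} :=
    ⟨0, hasMono_zero _ _⟩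
  have ne2 : Set.Nonempty {ℓ | HasMonoPathG (· < · : β → β → Prop) G₂ ℓ} :=
    ⟨0, hasMono_zero _ _⟩
  have neP : Set.Nonempty {ℓ | HasMonoPathG lexLT (lexProd G₁ G₂) ℓ} :=
    ⟨0, hasMono_zero _ _⟩
  have hL1 : HasMonoPathG (· < ·) G₁ (longestMono (· < ·) G₁) :=
    Nat.sSup_mem ne1 bdd1
  have hL2 : HasMonoPathG (· < ·) G₂ (longestMono (· < ·) G₂) :=
    Nat.sSup_mem ne2 bdd2
  have hL1pos : 1 ≤ longestMono (· < ·) G₁ := le_csSup bdd1 (hasMono_one _ _)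
  apply le_antisymm
  · apply csSup_le neP
    intro ℓ hℓ
    exact lexProd_mono_le G₁ G₂ (fun m hm => le_csSup bdd1 hm) (fun m hm => le_csSup bdd2 hm) hℓ
  · exact le_csSup bddP (lexProd_hasMono G₁ G₂ hL1pos hL1 hL2)
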